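/- Every perfectly labelable n-effect observable on a d-dimensional space (d ≥ n) has the form M_i = |e_i⟩⟨e_i| + A_i for i = 1,…,n−1 and M_n = A_n, where {e_1,…,e_{n−1}} is an orthonormal set spanning an (n−1)-dimensional subspace H_{n−1}, each A_i ≥ 0 is supported on the orthogonal complement of H_{n−1}, and Σ_{i=1}^n A_i equals the identity on that orthogonal complement. Conversely, every observable of this form is perfectly labelable. -/

import Mathlib

open Matrix Finset
open scoped ComplexOrder

section Helpers

variable {d : ℕ}

private lemma vmv_mul (u v : Fin d → ℂ) (M : Matrix (Fin d) (Fin d) ℂ) :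
    vecMulVec u v * M = vecMulVec u (v ᵥ* M) := by
  ext i j
  simp [vecMulVec_apply, Matrix.mul_apply, Matrix.vecMul, dotProduct, Finset.mul_sum, mul_assoc]

private lemma mul_vmv (u v : Fin d → ℂ) (M : Matrix (Fin d) (Fin d) ℂ) :
    M * vecMulVec u v = vecMulVec (M *ᵥ u) v := by
  ext i j
  simp [vecMulVec_apply, Matrix.mul_apply, Matrix.mulVec, dotProduct, Finset.sum_mul, mul_assoc]

private lemma vmv_mulVec (u v x : Fin d → ℂ) :
    vecMulVec u v *ᵥ x = (v ⬝ᵥ x) • u := by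
  ext i
  simp [Matrix.mulVec, vecMulVec_apply, dotProduct, Finset.sum_mul, Finset.mul_sum]
  apply Finset.sum_congr rfl
  intro k _
  ring

private lemma vmv_herm (u : Fin d → ℂ) : (vecMulVec u (star u))ᴴ = vecMulVec u (star u) := by
  ext i j
  simp [conjTranspose_apply, vecMulVec_apply, mul_comm]

private lemma sum_mulVec' {n : ℕ} (s : Finset (Fin n)) (M : Fin n → Matrix (Fin d) (Fin d) ℂ)
    (x : Fin d → ℂ) : (∑ k ∈ s, M k) *ᵥ x = ∑ k ∈ s, M k *ᵥ x := by
  ext i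
  simp only [Matrix.mulVec, dotProduct, Matrix.sum_apply, Finset.sum_mul, Finset.sum_apply]
  rw [Finset.sum_comm]

private lemma eigvec_other_zero {n : ℕ} (M : Fin n → Matrix (Fin d) (Fin d) ℂ)
    (hM : ∀ j, (M j).PosSemidef) (hsum : ∑ j, M j = 1)
    {i j : Fin n} (hij : i ≠ j) {φ : Fin d → ℂ} (hφ : M j *ᵥ φ = φ) :
    M i *ᵥ φ = 0 := by
  have hsub : ∑ k ∈ Finset.univ.erase j, M k = 1 - M j := by
    rw [Finset.sum_erase_eq_sub (Finset.mem_univ j), hsum]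
  have h0 : ∑ k ∈ Finset.univ.erase j, star φ ⬝ᵥ (M k *ᵥ φ) = 0 := by
    have hv : ∑ k ∈ Finset.univ.erase j, M k *ᵥ φ = 0 := by
      rw [← sum_mulVec', hsub, Matrix.sub_mulVec, Matrix.one_mulVec, hφ, sub_self]
    calc ∑ k ∈ Finset.univ.erase j, star φ ⬝ᵥ (M k *ᵥ φ)
        = star φ ⬝ᵥ ∑ k ∈ Finset.univ.erase j, (M k *ᵥ φ) := by
          simp only [dotProduct, Finset.sum_apply, Finset.mul_sum]
          rw [Finset.sum_comm]
      _ = 0 := by rw [hv, dotProduct_zero]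
  have hz : star φ ⬝ᵥ (M i *ᵥ φ) = 0 := by
    have := (Finset.sum_eq_zero_iff_of_nonneg (fun k _ => (hM k).dotProduct_mulVec_nonneg φ)).mp h0
    exact this i (Finset.mem_erase.mpr ⟨hij, Finset.mem_univ i⟩)
  exact ((hM i).dotProduct_mulVec_zero_iff φ).mp hz

private lemma normalize_eigvec (M : Matrix (Fin d) (Fin d) ℂ) {φ : Fin d → ℂ} (hφ0 : φ ≠ 0)
    (hφ : M *ᵥ φ = φ) : ∃ e : Fin d → ℂ, M *ᵥ e = e ∧ star e ⬝ᵥ e = 1 := by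
  set t : ℝ := ∑ k, Complex.normSq (φ k) with ht_def
  have htφ : star φ ⬝ᵥ φ = (t : ℂ) := by
    simp only [dotProduct, Pi.star_apply, ht_def]
    push_cast
    exact Finset.sum_congr rfl fun k _ => (Complex.normSq_eq_conj_mul_self).symm ▸ rfl
  have ht : 0 < t := by
    obtain ⟨k, hk⟩ := Function.ne_iff.mp hφ0
    exact Finset.sum_pos' (fun k _ => Complex.normSq_nonneg _)
      ⟨k, Finset.mem_univ k, Complex.normSq_pos.mpr hk⟩
  set c : ℂ := ((Real.sqrt t : ℝ) : ℂ)⁻¹ with hc_def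
  refine ⟨c • φ, ?_, ?_⟩
  · rw [Matrix.mulVec_smul, hφ]
  · have hstar : star (c • φ) = star c • star φ := by
      ext k; simp [hc_def, mul_comm]
    rw [hstar, smul_dotProduct, dotProduct_smul, htφ, smul_eq_mul, smul_eq_mul]
    have hcc : star c = c := by
      simp [hc_def, ← Complex.ofReal_inv]
    rw [hcc, hc_def, ← Complex.ofReal_inv, ← Complex.ofReal_mul, ← Complex.ofReal_mul]
    norm_cast
    rw [← mul_assoc, ← mul_inv, Real.mul_self_sqrt ht.le, inv_mul_cancel₀ ht.ne']

end Helpers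

theorem perfectly_labelable_parametrization
    {d n : ℕ} (hn2 : 2 ≤ n) (hnd : n ≤ d)
    (M : Fin n → Matrix (Fin d) (Fin d) ℂ)
    (hM : ∀ j, (M j).PosSemidef) (hsum : ∑ j, M j = 1) :
    (∃ S : Finset (Fin n), n - 1 ≤ S.card ∧ ∀ i ∈ S,
        ∃ φ : Fin d → ℂ, φ ≠ 0 ∧ (M i).mulVec φ = φ) ↔
    (∃ (i₀ : Fin n) (e : Fin n → (Fin d → ℂ)) (A : Fin n → Matrix (Fin d) (Fin d) ℂ),
        (∀ i ∈ Finset.univ.erase i₀, ∀ j ∈ Finset.univ.erase i₀,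
            star (e i) ⬝ᵥ e j = if i = j then 1 else 0) ∧
        (∀ i, (A i).PosSemidef) ∧
        (∀ i ∈ Finset.univ.erase i₀, M i = vecMulVec (e i) (star (e i)) + A i) ∧
        M i₀ = A i₀ ∧
        (∀ i, A i = (1 - ∑ k ∈ Finset.univ.erase i₀, vecMulVec (e k) (star (e k))) *
            A i * (1 - ∑ k ∈ Finset.univ.erase i₀, vecMulVec (e k) (star (e k)))) ∧
        (∑ i, A i = 1 - ∑ k ∈ Finset.univ.erase i₀, vecMulVec (e k) (star (e k)))) := by
  constructor
  · rintro ⟨S, hScard, hS⟩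
    -- find distinguished index i₀ with erase i₀ ⊆ S
    obtain ⟨i₀, hi₀⟩ : ∃ i₀ : Fin n, ∀ i, i ≠ i₀ → i ∈ S := by
      by_cases hall : ∀ i : Fin n, i ∈ S
      · exact ⟨⟨0, by omega⟩, fun i _ => hall i⟩
      · push_neg at hall
        obtain ⟨i₀, hi₀S⟩ := hall
        refine ⟨i₀, fun i hi => ?_⟩
        by_contra hiS
        have hsub : S ⊆ (Finset.univ.erase i₀).erase i := by
          intro x hx
          refine Finset.mem_erase.mpr ⟨fun h => hiS (h ▸ hx),
            Finset.mem_erase.mpr ⟨fun h => hi₀S (h ▸ hx), Finset.mem_univ x⟩⟩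
        have hle := Finset.card_le_card hsub
        have hcard : ((Finset.univ.erase i₀).erase i).card = n - 2 := by
          rw [Finset.card_erase_of_mem
              (Finset.mem_erase.mpr ⟨hi, Finset.mem_univ i⟩),
            Finset.card_erase_of_mem (Finset.mem_univ i₀), Finset.card_univ,
            Fintype.card_fin]
          omega
        omega
    -- choose normalized eigenvectors
    have hchoice : ∀ i : Fin n, i ≠ i₀ → ∃ e : Fin d → ℂ, M i *ᵥ e = e ∧ star e ⬝ᵥ e = 1 := by
      intro i hi
      obtain ⟨φ, hφ0, hφ⟩ := hS i (hi₀ i hi)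
      exact normalize_eigvec _ hφ0 hφ
    choose e' he1 he2 using hchoice
    set e : Fin n → Fin d → ℂ := fun i => if h : i = i₀ then 0 else e' i h with he_def
    have heig : ∀ i, i ≠ i₀ → M i *ᵥ e i = e i := by
      intro i h; simp only [he_def, dif_neg h]; exact he1 i h
    have hnorm : ∀ i, i ≠ i₀ → star (e i) ⬝ᵥ e i = 1 := by
      intro i h; simp only [he_def, dif_neg h]; exact he2 i h
    have horth0 : ∀ i j : Fin n, i ≠ i₀ → j ≠ i₀ → i ≠ j → star (e i) ⬝ᵥ e j = 0 := by
      intro i j hi hj hij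
      have hz : M i *ᵥ e j = 0 := eigvec_other_zero M hM hsum hij (heig j hj)
      calc star (e i) ⬝ᵥ e j = star (M i *ᵥ e i) ⬝ᵥ e j := by rw [heig i hi]
        _ = star (e i) ᵥ* (M i)ᴴ ⬝ᵥ e j := by rw [star_mulVec]
        _ = star (e i) ᵥ* (M i) ⬝ᵥ e j := by rw [(hM i).1]
        _ = star (e i) ⬝ᵥ (M i *ᵥ e j) := (dotProduct_mulVec _ _ _).symm
        _ = 0 := by rw [hz, dotProduct_zero]
    set P : Fin n → Matrix (Fin d) (Fin d) ℂ := fun i => vecMulVec (e i) (star (e i)) with hP_def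
    set Q : Matrix (Fin d) (Fin d) ℂ := ∑ k ∈ Finset.univ.erase i₀, P k with hQ_def
    have hPherm : ∀ i, (P i)ᴴ = P i := fun i => vmv_herm (e i)
    have hPM : ∀ i, i ≠ i₀ → P i * M i = P i := by
      intro i hi
      simp only [hP_def]
      rw [vmv_mul]
      congr 1
      rw [show star (e i) ᵥ* M i = star (e i) ᵥ* (M i)ᴴ from by rw [(hM i).1],
        ← star_mulVec, heig i hi]
    have hMP : ∀ i, i ≠ i₀ → M i * P i = P i := by
      intro i hi
      have := congrArg conjTranspose (hPM i hi)
      rwa [conjTranspose_mul, hPherm i, (hM i).1] at this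
    have hPP : ∀ i, i ≠ i₀ → P i * P i = P i := by
      intro i hi
      simp only [hP_def]
      rw [mul_vmv, vmv_mulVec, hnorm i hi, one_smul]
    -- the remainder operators
    set A : Fin n → Matrix (Fin d) (Fin d) ℂ :=
      fun i => if i = i₀ then M i₀ else M i - P i with hA_def
    have hAi₀ : A i₀ = M i₀ := by simp [hA_def]
    have hAne : ∀ i, i ≠ i₀ → A i = M i - P i := by
      intro i hi; simp [hA_def, hi]
    have hexp : ∀ i, i ≠ i₀ → (1 - P i) * M i * (1 - P i) = M i - P i := by
      intro i hi
      have h1 : (1 - P i) * M i = M i - P i := by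
        rw [sub_mul, one_mul, hPM i hi]
      rw [h1, sub_mul, mul_sub, mul_one, hMP i hi, mul_sub, mul_one, hPP i hi]
      abel
    have hApsd : ∀ i, (A i).PosSemidef := by
      intro i
      by_cases hi : i = i₀
      · rw [hi, hAi₀]; exact hM i₀
      · rw [hAne i hi, ← hexp i hi]
        have hherm : (1 - P i)ᴴ = 1 - P i := by
          rw [conjTranspose_sub, conjTranspose_one, hPherm i]
        rw [show (1 - P i) * M i * (1 - P i) = (1 - P i) * M i * (1 - P i)ᴴ from by
          rw [hherm]]
        exact (hM i).mul_mul_conjTranspose_same _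
    have hAe : ∀ i k, k ≠ i₀ → A i *ᵥ e k = 0 := by
      intro i k hk
      by_cases hi : i = i₀
      · rw [hi, hAi₀]
        exact eigvec_other_zero M hM hsum (Ne.symm hk) (heig k hk)
      · rw [hAne i hi, Matrix.sub_mulVec]
        by_cases hik : i = k
        · subst hik
          rw [heig i hi, hP_def]
          rw [vmv_mulVec, hnorm i hi, one_smul, sub_self]
        · rw [eigvec_other_zero M hM hsum hik (heig k hk), hP_def, vmv_mulVec,
            horth0 i k hi hk hik, zero_smul, sub_self]
    have hAQ : ∀ i, A i * Q = 0 := by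
      intro i
      rw [hQ_def, Finset.mul_sum]
      refine Finset.sum_eq_zero fun k hk => ?_
      have hk' : k ≠ i₀ := (Finset.mem_erase.mp hk).1
      rw [hP_def, mul_vmv, hAe i k hk']
      ext a b
      simp [vecMulVec_apply]
    have hQherm : Qᴴ = Q := by
      rw [hQ_def, conjTranspose_sum]
      exact Finset.sum_congr rfl fun k _ => hPherm k
    have hQA : ∀ i, Q * A i = 0 := by
      intro i
      have := congrArg conjTranspose (hAQ i)
      rwa [conjTranspose_mul, hQherm, (hApsd i).1, conjTranspose_zero] at this
    refine ⟨i₀, e, A, ?_, hApsd, ?_, hAi₀.symm, ?_, ?_⟩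
    · intro i hi j hj
      have hi' := (Finset.mem_erase.mp hi).1
      have hj' := (Finset.mem_erase.mp hj).1
      by_cases hij : i = j
      · rw [if_pos hij, hij, hnorm j hj']
      · rw [if_neg hij, horth0 i j hi' hj' hij]
    · intro i hi
      rw [hAne i (Finset.mem_erase.mp hi).1]
      abel
    · intro i
      have : (1 - Q) * A i * (1 - Q) = A i := by
        rw [sub_mul, one_mul, hQA i, sub_zero, mul_sub, mul_one, hAQ i, sub_zero]
      exact this.symm
    · have hsplit : ∑ i, A i = ∑ i, M i - Q := by
        rw [← Finset.sum_erase_add _ _ (Finset.mem_univ i₀),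
          ← Finset.sum_erase_add _ M (Finset.mem_univ i₀), hAi₀]
        have h2 : ∑ i ∈ Finset.univ.erase i₀, A i
            = ∑ i ∈ Finset.univ.erase i₀, (M i - P i) :=
          Finset.sum_congr rfl fun i hi => hAne i (Finset.mem_erase.mp hi).1
        rw [h2, Finset.sum_sub_distrib, hQ_def]
        abel
      rw [hsplit, hsum]
  · rintro ⟨i₀, e, A, horth, hApsd, hMeq, hMi₀, hsupp, hAsum⟩
    refine ⟨Finset.univ.erase i₀, ?_, ?_⟩
    · rw [Finset.card_erase_of_mem (Finset.mem_univ _), Finset.card_univ, Fintype.card_fin]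
    · intro i hi
      have hnorm : star (e i) ⬝ᵥ e i = 1 := by
        have := horth i hi i hi
        rwa [if_pos rfl] at this
      refine ⟨e i, ?_, ?_⟩
      · intro h0
        rw [h0] at hnorm
        simp at hnorm
      · set Q : Matrix (Fin d) (Fin d) ℂ :=
          ∑ k ∈ Finset.univ.erase i₀, vecMulVec (e k) (star (e k)) with hQ_def
        have hQe : Q *ᵥ e i = e i := by
          rw [hQ_def, sum_mulVec']
          have : ∀ k ∈ Finset.univ.erase i₀,
              vecMulVec (e k) (star (e k)) *ᵥ e i = if k = i then e i else 0 := by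
            intro k hk
            rw [vmv_mulVec, horth k hk i hi]
            rcases eq_or_ne k i with h | h
            · rw [if_pos h, if_pos h, one_smul, h]
            · rw [if_neg h, if_neg h, zero_smul]
          rw [Finset.sum_congr rfl this, Finset.sum_ite_eq' _ i (fun _ => e i), if_pos hi]
        have hAe : A i *ᵥ e i = 0 := by
          rw [hsupp i, ← Matrix.mulVec_mulVec, Matrix.sub_mulVec,
            Matrix.one_mulVec, hQe, sub_self, Matrix.mulVec_zero]
        rw [hMeq i hi, Matrix.add_mulVec, hAe, add_zero, vmv_mulVec, hnorm, one_smul]
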